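/- arXiv:2006.15730 — 3 statements merged into one kernel-verified Lean document; each statement's English description precedes it below -/
import Mathlib

section
/- Let G be a critical bipartite graph with parts X and Y, let x_0 ∈ X, and let C be a cycle in G with V(C) ∩ X = X − {x_0}. Then x_0 has at least two neighbors on C. -/
open SimpleGraph Set

/-- `(X, Y)` is a bipartition of the graph `G`. -/
def IsBipartition {V : Type*} (G : SimpleGraph V) (X Y : Set V) : Prop :=
  X ∪ Y = Set.univ ∧ Disjoint X Y ∧
    ∀ ⦃u v⦄, G.Adj u v → (u ∈ X ∧ v ∈ Y) ∨ (u ∈ Y ∧ v ∈ X)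

/-- The super-neighborhood `N̂(A)`: vertices of `Y` with at least two neighbors in `A`. -/
def superNbhd {V : Type*} (G : SimpleGraph V) (Y A : Set V) : Set V :=
  {y ∈ Y | 2 ≤ (A ∩ G.neighborSet y).ncard}

/-- The subgraph of `G` induced on the vertex set `S` is 2-connected. -/
def TwoConnectedOn {V : Type*} (G : SimpleGraph V) (S : Set V) : Prop :=
  3 ≤ S.ncard ∧ ∀ v ∈ S, (G.induce (S \ {v})).Connected

/-- Condition (*) for the `(X,Y)`-bigraph `G`. -/
def StarCond {V : Type*} (G : SimpleGraph V) (X Y : Set V) : Prop :=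
  ∀ A ⊆ X, 3 ≤ A.ncard →
    A.ncard ≤ (superNbhd G Y A).ncard ∧ TwoConnectedOn G (A ∪ superNbhd G Y A)

/-- `G` has a cycle with all vertices inside `S` whose set of vertices in `X` is exactly `A`. -/
def CycleOnWithin {V : Type*} (G : SimpleGraph V) (X A S : Set V) : Prop :=
  ∃ (v : V) (c : G.Walk v v), c.IsCycle ∧ {u | u ∈ c.support} ⊆ S ∧
    {u | u ∈ c.support} ∩ X = A

/-- The subgraph of `G` induced on `S` is super-cyclic with respect to the part `X`. -/
def SuperCyclicWithin {V : Type*} (G : SimpleGraph V) (X S : Set V) : Prop :=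
  ∀ A ⊆ X, 3 ≤ A.ncard → CycleOnWithin G X A S

/-- `G` is super-cyclic with respect to the part `X`. -/
def SuperCyclic {V : Type*} (G : SimpleGraph V) (X : Set V) : Prop :=
  SuperCyclicWithin G X Set.univ

/-- The `(X,Y)`-bigraph `G` is critical. -/
def Critical {V : Type*} (G : SimpleGraph V) (X Y : Set V) : Prop :=
  StarCond G X Y ∧ ¬ SuperCyclic G X ∧ superNbhd G Y X = Y ∧
    ∀ X' ⊂ X, SuperCyclicWithin G X' (X' ∪ Y)

/-- The critical `(X,Y)`-bigraph `G` is saturated: adding any `X,Y`-edge makes it super-cyclic. -/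
def Saturated {V : Type*} (G : SimpleGraph V) (X Y : Set V) : Prop :=
  ∀ x ∈ X, ∀ y ∈ Y, ¬ G.Adj x y →
    SuperCyclic (G ⊔ SimpleGraph.fromEdgeSet {s(x, y)}) X

/-- `G` is `Y`-minimal: every proper subgraph `(X', Y'; E')` satisfying (*) is super-cyclic. -/
def YMinimal {V : Type*} (G : SimpleGraph V) (X Y : Set V) : Prop :=
  ∀ (H : SimpleGraph V) (X' Y' : Set V), H ≤ G → X' ⊆ X → Y' ⊆ Y →
    (∀ ⦃u v⦄, H.Adj u v → (u ∈ X' ∧ v ∈ Y') ∨ (u ∈ Y' ∧ v ∈ X')) →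
    ¬ (H = G ∧ X' = X ∧ Y' = Y) →
    StarCond H X' Y' → SuperCyclic H X'



namespace Stmt14Aux

variable {V : Type*} [DecidableEq V] {G : SimpleGraph V}

lemma start_mem_tail_support {v : V} (p : G.Walk v v) (hp : ¬ p.Nil) :
    v ∈ p.support.tail := by
  obtain ⟨u, h, q, rfl⟩ := SimpleGraph.Walk.not_nil_iff.mp hp
  simp [SimpleGraph.Walk.support_cons]

lemma mem_closed_support_iff_tail {w : V} (p : G.Walk w w) (hp : ¬ p.Nil) (u : V) :
    u ∈ p.support ↔ u ∈ p.support.tail := by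
  constructor
  · intro h
    rw [p.support_eq_cons] at h
    rcases List.mem_cons.mp h with rfl | h
    · exact start_mem_tail_support p hp
    · exact h
  · intro h
    rw [p.support_eq_cons]
    exact List.mem_cons_of_mem _ h

lemma mem_rotate_iff {v y u : V} {c : G.Walk v v}
    (hc : c.IsCycle) (hy : y ∈ c.support) :
    u ∈ (c.rotate y hy).support ↔ u ∈ c.support := by
  have hperm := SimpleGraph.Walk.support_rotate c y hy
  exact (mem_closed_support_iff_tail _ (hc.rotate hy).not_nil u).trans
    (hperm.mem_iff.trans (mem_closed_support_iff_tail _ hc.not_nil u).symm)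

lemma cycle_decomp {v y : V} (c : G.Walk v v)
    (hc : c.IsCycle) (hy : y ∈ c.support) :
    ∃ (xa xb : V) (q : G.Walk xa xb), xa ≠ xb ∧ G.Adj y xa ∧ G.Adj y xb ∧
      q.support.Nodup ∧ y ∉ q.support ∧ ∀ u, u ∈ c.support ↔ (u = y ∨ u ∈ q.support) := by
  have hc' : (c.rotate y hy).IsCycle := hc.rotate hy
  have hmemr : ∀ u, u ∈ (c.rotate y hy).support ↔ u ∈ c.support :=
    fun u => mem_rotate_iff hc hy
  set c' := c.rotate y hy with hc'def
  have hlen := hc'.three_le_length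
  obtain ⟨xa, h, p, hp⟩ := SimpleGraph.Walk.not_nil_iff.mp hc'.not_nil
  have hclen : c'.length = p.length + 1 := by rw [hp]; simp
  have hpnn : ¬ p.Nil := by rw [SimpleGraph.Walk.nil_iff_length_eq]; omega
  have hprnn : ¬ p.reverse.Nil := by
    rw [SimpleGraph.Walk.nil_iff_length_eq, SimpleGraph.Walk.length_reverse]
    rw [SimpleGraph.Walk.nil_iff_length_eq] at hpnn; exact hpnn
  obtain ⟨xb, h', q', hq'⟩ := SimpleGraph.Walk.not_nil_iff.mp hprnn
  have hpeq : p = q'.reverse.append (SimpleGraph.Walk.cons h'.symm SimpleGraph.Walk.nil) := by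
    have h0 := congrArg SimpleGraph.Walk.reverse hq'
    rwa [SimpleGraph.Walk.reverse_reverse, SimpleGraph.Walk.reverse_cons] at h0
  have hsup : c'.support = y :: (q'.reverse.support ++ [y]) := by
    rw [hp, SimpleGraph.Walk.support_cons, hpeq, SimpleGraph.Walk.support_append]
    simp
  have hnd : (q'.reverse.support ++ [y]).Nodup := by
    have h0 := hc'.support_nodup
    rw [hsup] at h0
    simpa using h0
  obtain ⟨hqnd, -, hdisj⟩ := List.nodup_append.mp hnd
  have hynot : y ∉ q'.reverse.support := fun hm => hdisj y hm y (by simp) rfl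
  have hne : xa ≠ xb := by
    rintro rfl
    have hnil : q'.reverse.Nil := by
      by_contra hqn
      obtain ⟨z, hz, r, hr⟩ := SimpleGraph.Walk.not_nil_iff.mp hqn
      have hmem : xa ∈ r.support := r.end_mem_support
      rw [hr, SimpleGraph.Walk.support_cons] at hqnd
      exact (List.nodup_cons.mp hqnd).1 hmem
    have h0 : q'.reverse.length = 0 := SimpleGraph.Walk.nil_iff_length_eq.mp hnil
    have h1 : p.length = 1 := by
      rw [hpeq]; simp [SimpleGraph.Walk.length_append, h0]
    omega
  refine ⟨xa, xb, q'.reverse, hne, h, h', hqnd, hynot, ?_⟩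
  intro u
  rw [← hmemr u, SimpleGraph.Walk.mem_support_iff]
  rw [hsup]
  simp only [List.tail_cons, List.mem_append, List.mem_singleton]
  tauto

lemma second_eq {a b w : V} (q : G.Walk a b)
    (hnd : q.support.Nodup) (r : G.Walk w b) (h : G.Adj a w) (heq : q = SimpleGraph.Walk.cons h r)
    (r₂ : G.Walk w a) (h₂ : G.Adj b w) (heq₂ : q.reverse = SimpleGraph.Walk.cons h₂ r₂) :
    q.support = [a, w, b] := by
  obtain ⟨t1, ht1⟩ : ∃ t, r.support = w :: t := ⟨_, r.support_eq_cons⟩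
  obtain ⟨t2, ht2⟩ : ∃ t, r₂.support = w :: t := ⟨_, r₂.support_eq_cons⟩
  have h1 : q.support = a :: w :: t1 := by
    rw [heq, SimpleGraph.Walk.support_cons, ht1]
  have h2 : q.support.reverse = b :: w :: t2 := by
    rw [← SimpleGraph.Walk.support_reverse, heq₂, SimpleGraph.Walk.support_cons, ht2]
  have h3 : q.support = t2.reverse ++ [w, b] := by
    conv_lhs => rw [← List.reverse_reverse q.support]
    rw [h2]
    simp
  rcases hl : t2.reverse with - | ⟨z, l⟩
  · rw [hl] at h3
    rw [h3] at h1
    simp only [List.nil_append] at h1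
    exfalso
    have hwa : w = a := by injection h1
    exact h.ne hwa.symm
  rcases l with - | ⟨z', t⟩
  · rw [hl] at h3
    simp only [List.cons_append, List.nil_append] at h3
    rw [h3] at h1
    have hz : z = a := by injection h1
    rw [h3, hz]
  · rw [hl] at h3
    simp only [List.cons_append] at h3
    rw [h3] at h1 hnd
    exfalso
    injection h1 with h1a h1rest
    injection h1rest with h1b h1c
    rw [h1b] at hnd
    exact (List.nodup_cons.mp (List.nodup_cons.mp hnd).2).1 (by simp)

lemma build {x₀ g g'' xa xb : V} (q : G.Walk xa xb)
    (hq : q.support.Nodup) (h1 : G.Adj x₀ g) (h2 : G.Adj g xa) (h3 : G.Adj xb g'')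
    (h4 : G.Adj g'' x₀) (hgg : g ≠ g'') (hgq : g ∉ q.support) (hg2q : g'' ∉ q.support)
    (hx0q : x₀ ∉ q.support) (hxa0 : xa ≠ x₀) :
    ∃ W : G.Walk x₀ x₀, W.IsCycle ∧
      ∀ u, u ∈ W.support ↔ (u = x₀ ∨ u = g ∨ u = g'' ∨ u ∈ q.support) := by
  classical
  set E2 : G.Walk xb x₀ := SimpleGraph.Walk.cons h3 (SimpleGraph.Walk.cons h4 SimpleGraph.Walk.nil) with hE2
  set Q : G.Walk g x₀ := SimpleGraph.Walk.cons h2 (q.append E2) with hQ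
  have hQsup : Q.support = g :: (q.support ++ [g'', x₀]) := by
    rw [hQ, SimpleGraph.Walk.support_cons, SimpleGraph.Walk.support_append, hE2]
    simp
  have hQpath : Q.IsPath := by
    rw [SimpleGraph.Walk.isPath_def, hQsup]
    refine List.nodup_cons.mpr ⟨?_, ?_⟩
    · intro hmem
      rcases List.mem_append.mp hmem with hm | hm
      · exact hgq hm
      · rcases List.mem_cons.mp hm with hm1 | hm1
        · exact hgg hm1
        · rcases List.mem_cons.mp hm1 with hm2 | hm2
          · exact h1.ne' hm2
          · simp at hm2
    · refine List.Nodup.append hq (by simp [h4.ne]) ?_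
      intro u hu hmem
      rcases List.mem_cons.mp hmem with hm1 | hm1
      · exact hg2q (hm1 ▸ hu)
      · rcases List.mem_cons.mp hm1 with hm2 | hm2
        · exact hx0q (hm2 ▸ hu)
        · simp at hm2
  have hedge : s(x₀, g) ∉ Q.edges := by
    have hQe : Q.edges = s(g, xa) :: (q.edges ++ [s(xb, g''), s(g'', x₀)]) := by
      rw [hQ, SimpleGraph.Walk.edges_cons, SimpleGraph.Walk.edges_append, hE2]
      simp
    rw [hQe]
    intro hmem
    rcases List.mem_cons.mp hmem with hm | hm
    · rw [Sym2.eq_iff] at hm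
      rcases hm with ⟨ha, hb⟩ | ⟨ha, hb⟩
      · exact h1.ne ha
      · exact hxa0 ha.symm
    rcases List.mem_append.mp hm with hm | hm
    · exact hx0q (q.fst_mem_support_of_mem_edges hm)
    rcases List.mem_cons.mp hm with hm1 | hm1
    · rw [Sym2.eq_iff] at hm1
      rcases hm1 with ⟨ha, hb⟩ | ⟨ha, hb⟩
      · exact hgg hb
      · exact h4.ne ha.symm
    rcases List.mem_cons.mp hm1 with hm2 | hm2
    · rw [Sym2.eq_iff] at hm2
      rcases hm2 with ⟨ha, hb⟩ | ⟨ha, hb⟩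
      · exact h4.ne ha.symm
      · exact hgg hb
    · simp at hm2
  refine ⟨SimpleGraph.Walk.cons h1 Q,
    (SimpleGraph.Walk.cons_isCycle_iff Q h1).mpr ⟨hQpath, hedge⟩, ?_⟩
  intro u
  rw [SimpleGraph.Walk.support_cons, hQsup]
  simp only [List.mem_cons, List.mem_append, List.not_mem_nil, or_false]
  tauto

lemma exists_common_nbr {X Y : Set V}
    (hadj : ∀ ⦃u v⦄, G.Adj u v → (u ∈ X ∧ v ∈ Y) ∨ (u ∈ Y ∧ v ∈ X))
    (hdisj : Disjoint X Y) {D : Set V} (hconn : (G.induce D).Connected)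
    {x₀ xa : V} (hx₀ : x₀ ∈ X) (hxa : xa ∈ X) (hne : x₀ ≠ xa)
    (hx₀D : x₀ ∈ D) (hxaD : xa ∈ D)
    (hcover : ∀ u ∈ D, u ∈ X → u = x₀ ∨ u = xa) :
    ∃ y, G.Adj x₀ y ∧ G.Adj y xa := by
  obtain ⟨w⟩ := hconn.preconnected ⟨x₀, hx₀D⟩ ⟨xa, hxaD⟩
  suffices H : ∀ (n : ℕ) (w : (G.induce D).Walk ⟨x₀, hx₀D⟩ ⟨xa, hxaD⟩), w.length ≤ n →
      ∃ y, G.Adj x₀ y ∧ G.Adj y xa from H w.length w le_rfl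
  intro n
  induction n with
  | zero =>
    intro w hw
    exfalso
    have hnil : w.Nil := SimpleGraph.Walk.nil_iff_length_eq.mpr (Nat.le_zero.mp hw)
    exact hne (congrArg Subtype.val hnil.eq)
  | succ n ih =>
    intro w hw
    have hwnn : ¬ w.Nil :=
      SimpleGraph.Walk.not_nil_of_ne (fun h => hne (congrArg Subtype.val h))
    obtain ⟨u, h₁, w', hw'⟩ := SimpleGraph.Walk.not_nil_iff.mp hwnn
    have hadj₁ : G.Adj x₀ u.1 := h₁
    have huY : u.1 ∈ Y := by
      rcases hadj hadj₁ with ⟨-, hY⟩ | ⟨hY, -⟩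
      · exact hY
      · exact (Set.disjoint_left.mp hdisj hx₀ hY).elim
    have hw'nn : ¬ w'.Nil := by
      intro hn
      have he : u = ⟨xa, hxaD⟩ := hn.eq
      rw [he] at huY
      exact Set.disjoint_left.mp hdisj hxa huY
    obtain ⟨u', h₂, w'', hw''⟩ := SimpleGraph.Walk.not_nil_iff.mp hw'nn
    have hadj₂ : G.Adj u.1 u'.1 := h₂
    have hu'X : u'.1 ∈ X := by
      rcases hadj hadj₂ with ⟨hXX, -⟩ | ⟨-, hXX⟩
      · exact (Set.disjoint_left.mp hdisj hXX huY).elim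
      · exact hXX
    rcases hcover u'.1 u'.2 hu'X with hcase | hcase
    · have hu'eq : u' = ⟨x₀, hx₀D⟩ := Subtype.ext hcase
      refine ih (w''.copy hu'eq rfl) ?_
      rw [SimpleGraph.Walk.length_copy]
      have hlen : w.length = w''.length + 2 := by
        rw [hw', hw'']
        simp only [SimpleGraph.Walk.length_cons]
      omega
    · exact ⟨u.1, hadj₁, by rw [← hcase]; exact hadj₂⟩

end Stmt14Aux

theorem stmt_14 {V : Type*} [Fintype V] (G : SimpleGraph V) (X Y : Set V)
    (hbip : IsBipartition G X Y) (hcrit : Critical G X Y)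
    (x₀ : V) (hx₀ : x₀ ∈ X)
    (v : V) (c : G.Walk v v) (hc : c.IsCycle)
    (hbase : {u | u ∈ c.support} ∩ X = X \ {x₀}) :
    2 ≤ {w | w ∈ c.support ∧ G.Adj x₀ w}.ncard := by
  classical
  obtain ⟨hXY, hdisj, hadj⟩ := hbip
  obtain ⟨hstar, hnsc, hNY, hprop⟩ := hcrit
  have adjXY : ∀ {u w : V}, G.Adj u w → u ∈ X → w ∈ Y := by
    intro u w h hu
    rcases hadj h with ⟨-, hw⟩ | ⟨hu', -⟩
    · exact hw
    · exact (Set.disjoint_left.mp hdisj hu hu').elim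
  have adjYX : ∀ {u w : V}, G.Adj u w → u ∈ Y → w ∈ X := by
    intro u w h hu
    rcases hadj h with ⟨hu', -⟩ | ⟨-, hw⟩
    · exact (Set.disjoint_left.mp hdisj hu' hu).elim
    · exact hw
  -- the unique failing trace set is X itself
  rw [SuperCyclic, SuperCyclicWithin] at hnsc
  push_neg at hnsc
  obtain ⟨A, hAX, hA3, hnc⟩ := hnsc
  have hAeqX : A = X := by
    by_contra hne
    obtain ⟨x, hxX, hxA⟩ := Set.exists_of_ssubset (ssubset_iff_subset_ne.mpr ⟨hAX, hne⟩)
    have hsub : X \ {x} ⊂ X := Set.sdiff_singleton_ssubset.mpr hxX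
    have hAsub : A ⊆ X \ {x} := fun a ha => ⟨hAX ha, fun hh => hxA ((Set.mem_singleton_iff.mp hh) ▸ ha)⟩
    obtain ⟨v', c', hc', hS, hI⟩ := hprop _ hsub A hAsub hA3
    refine hnc ⟨v', c', hc', fun u _ => Set.mem_univ _, ?_⟩
    ext u
    simp only [Set.mem_inter_iff, Set.mem_setOf_eq]
    constructor
    · rintro ⟨hus, huX⟩
      have huXx : u ∈ X \ {x} := by
        rcases hS hus with hh | hh
        · exact hh
        · exact (Set.disjoint_left.mp hdisj huX hh).elim
      have : u ∈ {u | u ∈ c'.support} ∩ (X \ {x}) := ⟨hus, huXx⟩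
      rw [hI] at this
      exact this
    · intro huA
      have h1 : u ∈ {u | u ∈ c'.support} ∩ (X \ {x}) := by rw [hI]; exact huA
      exact ⟨h1.1, hAX huA⟩
  subst hAeqX
  rename' hAX => _hAX, hA3 => hX3, hnc => hF1
  -- 2-connectivity of all of G
  have hTC := (hstar A subset_rfl hX3).2
  have hUeq : A ∪ superNbhd G Y A = Set.univ := by rw [hNY]; exact hXY
  rw [TwoConnectedOn, hUeq] at hTC
  have hconn : ∀ w : V, (G.induce (Set.univ \ {w})).Connected :=
    fun w => hTC.2 w (Set.mem_univ w)
  -- assume for contradiction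
  by_contra hcon
  rw [not_le] at hcon
  have hS1 : ∀ g ∈ {w | w ∈ c.support ∧ G.Adj x₀ w}, ∀ g' ∈ {w | w ∈ c.support ∧ G.Adj x₀ w}, g = g' :=
    (Set.ncard_le_one (Set.toFinite _)).mp (by omega)
  have hx₀c : x₀ ∉ c.support := by
    intro h
    have h2 : x₀ ∈ {u | u ∈ c.support} ∩ A := ⟨h, hx₀⟩
    rw [hbase] at h2
    exact h2.2 rfl
  -- choose the special vertex y₁
  obtain ⟨y₁, hy₁Y, hy₁c, hKey⟩ :
      ∃ y₁, y₁ ∈ Y ∧ y₁ ∈ c.support ∧ ∀ g, G.Adj x₀ g → g ∈ c.support → g = y₁ := by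
    rcases Set.eq_empty_or_nonempty {w | w ∈ c.support ∧ G.Adj x₀ w} with hE | ⟨y₁, hy₁⟩
    · obtain ⟨u, hadj₁, qq, hqq⟩ := SimpleGraph.Walk.not_nil_iff.mp hc.not_nil
      have hus : u ∈ c.support := by
        rw [hqq, SimpleGraph.Walk.support_cons]
        exact List.mem_cons_of_mem _ qq.start_mem_support
      have hKey0 : ∀ g, G.Adj x₀ g → g ∈ c.support → False := by
        intro g hg hgc
        have : g ∈ {w | w ∈ c.support ∧ G.Adj x₀ w} := ⟨hgc, hg⟩
        rw [hE] at this
        exact this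
      rcases hadj hadj₁ with ⟨hvX, huY⟩ | ⟨hvY, huX⟩
      · exact ⟨u, huY, hus, fun g hg hgc => (hKey0 g hg hgc).elim⟩
      · exact ⟨v, hvY, c.start_mem_support, fun g hg hgc => (hKey0 g hg hgc).elim⟩
    · refine ⟨y₁, adjXY hy₁.2 hx₀, hy₁.1, fun g hg hgc => hS1 g ⟨hgc, hg⟩ y₁ hy₁⟩
  -- decompose the cycle at y₁
  obtain ⟨xa, xb, q, hab, hyxa, hyxb, hqnd, hy₁q, hmemc⟩ := Stmt14Aux.cycle_decomp c hc hy₁c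
  have hq_c : ∀ u, u ∈ q.support → u ∈ c.support := fun u hu => (hmemc u).mpr (Or.inr hu)
  have hxaX : xa ∈ A := adjYX hyxa hy₁Y
  have hxbX : xb ∈ A := adjYX hyxb hy₁Y
  have hxac : xa ∈ c.support := hq_c _ q.start_mem_support
  have hxbc : xb ∈ c.support := hq_c _ q.end_mem_support
  have hxa0 : xa ≠ x₀ := fun h => hx₀c (h ▸ hxac)
  have hxb0 : xb ≠ x₀ := fun h => hx₀c (h ▸ hxbc)
  have hx₀q : x₀ ∉ q.support := fun h => hx₀c (hq_c _ h)
  have hcov : ∀ u ∈ A, u ≠ x₀ → u ∈ q.support := by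
    intro u huX hu0
    have h1 : u ∈ {u | u ∈ c.support} ∩ A := by rw [hbase]; exact ⟨huX, hu0⟩
    rcases (hmemc u).mp h1.1 with hh | hh
    · exact (Set.disjoint_left.mp hdisj (hh ▸ huX) hy₁Y).elim
    · exact hh
  -- generic contradiction builder
  have FINAL : ∀ (s t : V) (r : G.Walk s t), r.support.Nodup →
      (∀ u, u ∈ r.support → u ∈ c.support) → (∀ u ∈ A, u ≠ x₀ → u ∈ r.support) →
      x₀ ∉ r.support → y₁ ∉ r.support → s ≠ x₀ →
      ∀ g g'', G.Adj x₀ g → G.Adj g s → G.Adj t g'' → G.Adj g'' x₀ → g ≠ g'' → False := by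
    intro s t r hrnd hrc hrcov hx₀r hy₁r hs0 g g'' hg1 hg2 hg3 hg4 hgg
    have hgY : g ∈ Y := adjXY hg1 hx₀
    have hg''Y : g'' ∈ Y := adjXY hg4.symm hx₀
    have hgr : g ∉ r.support := fun hm => hy₁r ((hKey g hg1 (hrc g hm)) ▸ hm)
    have hg''r : g'' ∉ r.support := fun hm => hy₁r ((hKey g'' hg4.symm (hrc g'' hm)) ▸ hm)
    obtain ⟨W, hW, hWsup⟩ := Stmt14Aux.build r hrnd hg1 hg2 hg3 hg4 hgg hgr hg''r hx₀r hs0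
    apply hF1
    refine ⟨x₀, W, hW, fun u _ => Set.mem_univ u, ?_⟩
    ext u
    simp only [Set.mem_inter_iff, Set.mem_setOf_eq]
    constructor
    · rintro ⟨-, hX⟩; exact hX
    · intro huX
      refine ⟨?_, huX⟩
      rw [hWsup u]
      by_cases hu0 : u = x₀
      · exact Or.inl hu0
      · exact Or.inr (Or.inr (Or.inr (hrcov u huX hu0)))
  -- case on |X|
  rcases eq_or_lt_of_le hX3 with hX3e | hX4
  · -- |X| = 3 : X = {x₀, xa, xb}
    have hsubT : ({x₀, xa, xb} : Set V) ⊆ A := by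
      intro u hu
      rcases hu with rfl | hu
      · exact hx₀
      rcases hu with rfl | hu
      · exact hxaX
      rcases hu with rfl
      exact hxbX
    have hx₀nm : x₀ ∉ ({xa, xb} : Set V) := by
      intro hm
      rcases hm with hm | hm
      · exact hxa0 hm.symm
      · exact hxb0 (Set.mem_singleton_iff.mp hm).symm
    have hTcard : ({x₀, xa, xb} : Set V).ncard = 3 := by
      rw [Set.ncard_insert_of_notMem hx₀nm (Set.toFinite _), Set.ncard_pair hab]
    have hXeq : ({x₀, xa, xb} : Set V) = A :=
      Set.eq_of_subset_of_ncard_le hsubT (by omega) (Set.toFinite A)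
    have hmemX : ∀ u ∈ A, u = x₀ ∨ u = xa ∨ u = xb := by
      intro u hu
      rw [← hXeq] at hu
      rcases hu with rfl | hu
      · exact Or.inl rfl
      rcases hu with rfl | hu
      · exact Or.inr (Or.inl rfl)
      rcases hu with rfl
      exact Or.inr (Or.inr rfl)
    have hgaE : ∃ y, G.Adj x₀ y ∧ G.Adj y xa := by
      refine Stmt14Aux.exists_common_nbr hadj hdisj (hconn xb) hx₀ hxaX (Ne.symm hxa0)
        ⟨Set.mem_univ _, fun hm => hxb0 ((Set.mem_singleton_iff.mp hm).symm ▸ rfl)⟩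
        ⟨Set.mem_univ _, fun hm => hab (Set.mem_singleton_iff.mp hm)⟩ ?_
      intro u hu huX
      rcases hmemX u huX with h | h | h
      · exact Or.inl h
      · exact Or.inr h
      · exact (hu.2 (h ▸ rfl)).elim
    have hgbE : ∃ y, G.Adj x₀ y ∧ G.Adj y xb := by
      refine Stmt14Aux.exists_common_nbr hadj hdisj (hconn xa) hx₀ hxbX (Ne.symm hxb0)
        ⟨Set.mem_univ _, fun hm => hxa0 ((Set.mem_singleton_iff.mp hm).symm ▸ rfl)⟩
        ⟨Set.mem_univ _, fun hm => hab (Set.mem_singleton_iff.mp hm).symm⟩ ?_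
      intro u hu huX
      rcases hmemX u huX with h | h | h
      · exact Or.inl h
      · exact (hu.2 (h ▸ rfl)).elim
      · exact Or.inr h
    obtain ⟨ga, hga1, hga2⟩ := hgaE
    obtain ⟨gb, hgb1, hgb2⟩ := hgbE
    by_cases hdist : ∃ g g'', (G.Adj x₀ g ∧ G.Adj g xa) ∧ (G.Adj x₀ g'' ∧ G.Adj g'' xb) ∧ g ≠ g''
    · obtain ⟨g, g'', ⟨hg1, hg2⟩, ⟨hg3, hg4⟩, hgg⟩ := hdist
      exact FINAL xa xb q hqnd hq_c hcov hx₀q hy₁q hxa0 g g'' hg1 hg2 hg4.symm hg3.symm hgg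
    · push_neg at hdist
      have hgagb : ga = gb := hdist ga gb ⟨hga1, hga2⟩ ⟨hgb1, hgb2⟩
      have hNx₀ : ∀ y, G.Adj x₀ y → y = ga := by
        intro y hy
        have hyY : y ∈ Y := adjXY hy hx₀
        have hy' : y ∈ superNbhd G Y A := by rw [hNY]; exact hyY
        have hcard2 : 1 < (A ∩ G.neighborSet y).ncard := lt_of_lt_of_le one_lt_two hy'.2
        obtain ⟨x, hxmem, hxne⟩ := Set.exists_ne_of_one_lt_ncard hcard2 x₀
        have hxadj : G.Adj y x := hxmem.2
        rcases hmemX x hxmem.1 with rfl | rfl | rfl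
        · exact (hxne rfl).elim
        · exact hdist y gb ⟨hy, hxadj⟩ ⟨hgb1, hgb2⟩ |>.trans hgagb.symm
        · exact (hdist ga y ⟨hga1, hga2⟩ ⟨hy, hxadj⟩).symm
      have hgaY : ga ∈ Y := adjXY hga1 hx₀
      have hx₀m : x₀ ∈ (Set.univ \ {ga} : Set V) :=
        ⟨Set.mem_univ _, fun hm => hga1.ne (Set.mem_singleton_iff.mp hm)⟩
      have hxam : xa ∈ (Set.univ \ {ga} : Set V) :=
        ⟨Set.mem_univ _, fun hm =>
          Set.disjoint_left.mp hdisj hxaX ((Set.mem_singleton_iff.mp hm) ▸ hgaY)⟩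
      obtain ⟨w⟩ := (hconn ga).preconnected ⟨x₀, hx₀m⟩ ⟨xa, hxam⟩
      have hwnn : ¬ w.Nil :=
        SimpleGraph.Walk.not_nil_of_ne
          (fun h => (Ne.symm hxa0) (congrArg Subtype.val h))
      obtain ⟨u, hu, w', -⟩ := SimpleGraph.Walk.not_nil_iff.mp hwnn
      have hadju : G.Adj x₀ u.1 := hu
      have := hNx₀ u.1 hadju
      exact u.2.2 (Set.mem_singleton_iff.mpr this)
  · -- |X| ≥ 4
    set B : Set V := {x₀, xa, xb} with hB
    have hx₀nm : x₀ ∉ ({xa, xb} : Set V) := by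
      intro hm
      rcases hm with hm | hm
      · exact hxa0 hm.symm
      · exact hxb0 (Set.mem_singleton_iff.mp hm).symm
    have hBcard : B.ncard = 3 := by
      rw [hB, Set.ncard_insert_of_notMem hx₀nm (Set.toFinite _), Set.ncard_pair hab]
    have hBX : B ⊆ A := by
      intro u hu
      rcases hu with rfl | hu
      · exact hx₀
      rcases hu with rfl | hu
      · exact hxaX
      rcases hu with rfl
      exact hxbX
    have hBss : B ⊂ A := by
      refine ssubset_iff_subset_ne.mpr ⟨hBX, ?_⟩
      intro hcontra
      rw [hcontra] at hBcard
      omega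
    obtain ⟨v₃, c₃, hc₃, hsub₃, hI₃⟩ := hprop B hBss B subset_rfl (by omega)
    have hXc₃ : ∀ u, u ∈ c₃.support → u ∈ A → u ∈ B := by
      intro u hu huX
      rcases hsub₃ hu with hh | hh
      · exact hh
      · exact (Set.disjoint_left.mp hdisj huX hh).elim
    have hBsub₃ : ∀ u ∈ B, u ∈ c₃.support := by
      intro u hu
      have h1 : u ∈ {u | u ∈ c₃.support} ∩ B := by rw [hI₃]; exact hu
      exact h1.1
    have hx₀c₃ : x₀ ∈ c₃.support := hBsub₃ _ (Set.mem_insert _ _)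
    obtain ⟨a, b, q₃, hab₃, h₀a, h₀b, hq₃nd, hx₀q₃, hmem₃⟩ :=
      Stmt14Aux.cycle_decomp c₃ hc₃ hx₀c₃
    have haY : a ∈ Y := adjXY h₀a hx₀
    have hbY : b ∈ Y := adjXY h₀b hx₀
    have hq₃nn : ¬ q₃.Nil := SimpleGraph.Walk.not_nil_of_ne hab₃
    obtain ⟨w₁, haw₁, r, hr⟩ := SimpleGraph.Walk.not_nil_iff.mp hq₃nn
    have hq₃rnn : ¬ q₃.reverse.Nil := SimpleGraph.Walk.not_nil_of_ne (Ne.symm hab₃)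
    obtain ⟨w₂, hbw₂, r₂, hr₂⟩ := SimpleGraph.Walk.not_nil_iff.mp hq₃rnn
    have hw₁q₃ : w₁ ∈ q₃.support := by
      rw [hr, SimpleGraph.Walk.support_cons]
      exact List.mem_cons_of_mem _ r.start_mem_support
    have hw₂q₃ : w₂ ∈ q₃.support := by
      have hmr : w₂ ∈ q₃.reverse.support := by
        rw [hr₂, SimpleGraph.Walk.support_cons]
        exact List.mem_cons_of_mem _ r₂.start_mem_support
      rw [SimpleGraph.Walk.support_reverse, List.mem_reverse] at hmr
      exact hmr
    have hw₁c₃ : w₁ ∈ c₃.support := (hmem₃ w₁).mpr (Or.inr hw₁q₃)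
    have hw₂c₃ : w₂ ∈ c₃.support := (hmem₃ w₂).mpr (Or.inr hw₂q₃)
    have hw₁X : w₁ ∈ A := adjYX haw₁ haY
    have hw₂X : w₂ ∈ A := adjYX hbw₂ hbY
    have hw₁0 : w₁ ≠ x₀ := fun h => hx₀q₃ (h ▸ hw₁q₃)
    have hw₂0 : w₂ ≠ x₀ := fun h => hx₀q₃ (h ▸ hw₂q₃)
    have hw₁ab : w₁ = xa ∨ w₁ = xb := by
      rcases hXc₃ _ hw₁c₃ hw₁X with h | h | h
      · exact (hw₁0 h).elim
      · exact Or.inl h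
      · exact Or.inr (Set.mem_singleton_iff.mp h)
    have hw₂ab : w₂ = xa ∨ w₂ = xb := by
      rcases hXc₃ _ hw₂c₃ hw₂X with h | h | h
      · exact (hw₂0 h).elim
      · exact Or.inl h
      · exact Or.inr (Set.mem_singleton_iff.mp h)
    have hww : w₁ ≠ w₂ := by
      rintro rfl
      have hsupeq := Stmt14Aux.second_eq q₃ hq₃nd r haw₁ hr r₂ hbw₂ hr₂
      have hxaq₃ : xa ∈ q₃.support := by
        have h1 := hBsub₃ xa (by rw [hB]; exact Set.mem_insert_of_mem _ (Set.mem_insert _ _))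
        rcases (hmem₃ xa).mp h1 with h | h
        · exact (hxa0 h).elim
        · exact h
      have hxbq₃ : xb ∈ q₃.support := by
        have h1 := hBsub₃ xb (by
          rw [hB]
          exact Set.mem_insert_of_mem _ (Set.mem_insert_of_mem _ rfl))
        rcases (hmem₃ xb).mp h1 with h | h
        · exact (hxb0 h).elim
        · exact h
      rw [hsupeq] at hxaq₃ hxbq₃
      simp only [List.mem_cons, List.not_mem_nil, or_false] at hxaq₃ hxbq₃
      have hxaw : xa = w₁ := by
        rcases hxaq₃ with h | h | h
        · exact ((Set.disjoint_left.mp hdisj hxaX) (h ▸ haY)).elim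
        · exact h
        · exact ((Set.disjoint_left.mp hdisj hxaX) (h ▸ hbY)).elim
      have hxbw : xb = w₁ := by
        rcases hxbq₃ with h | h | h
        · exact ((Set.disjoint_left.mp hdisj hxbX) (h ▸ haY)).elim
        · exact h
        · exact ((Set.disjoint_left.mp hdisj hxbX) (h ▸ hbY)).elim
      exact hab (hxaw.trans hxbw.symm)
    rcases hw₁ab with hw1 | hw1
    · have hw2 : w₂ = xb := by
        rcases hw₂ab with h | h
        · exact (hww (hw1.trans h.symm)).elim
        · exact h
      exact FINAL xa xb q hqnd hq_c hcov hx₀q hy₁q hxa0 a b h₀a (hw1 ▸ haw₁)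
        ((hw2 ▸ hbw₂).symm) h₀b.symm hab₃
    · have hw2 : w₂ = xa := by
        rcases hw₂ab with h | h
        · exact h
        · exact (hww (hw1.trans h.symm)).elim
      refine FINAL xb xa q.reverse ?_ ?_ ?_ ?_ ?_ hxb0 a b h₀a (hw1 ▸ haw₁)
        ((hw2 ▸ hbw₂).symm) h₀b.symm hab₃
      · rw [SimpleGraph.Walk.support_reverse]
        exact List.nodup_reverse.mpr hqnd
      · intro u hu
        rw [SimpleGraph.Walk.support_reverse, List.mem_reverse] at hu
        exact hq_c u hu
      · intro u hu hu0
        rw [SimpleGraph.Walk.support_reverse, List.mem_reverse]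
        exact hcov u hu hu0
      · rw [SimpleGraph.Walk.support_reverse, List.mem_reverse]
        exact hx₀q
      · rw [SimpleGraph.Walk.support_reverse, List.mem_reverse]
        exact hy₁q
end

section
/- Let C be a cycle in a bipartite graph G with parts X and Y, and let u, v ∈ V(C) ∩ X. If u and v have at most a crossings on C, then d_C(u) + d_C(v) ≤ |V(C)|/2 + 2 + a, where d_C(w) denotes the number of neighbors of w on C. -/
open SimpleGraph Set

open Finset in
lemma nat_core (k m : ℕ) (hk : 2 ≤ k) (hm0 : 0 < m) (hmk : m < k)
    (A B S : Finset ℕ) (hA : A ⊆ Finset.range k) (hB : B ⊆ Finset.range k)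
    (hS1 : ∀ t, 0 < t → t < m → t ∈ A → t - 1 ∈ B → t ∈ S)
    (hS2 : ∀ t, m < t → t < k → t - 1 ∈ A → t ∈ B → t ∈ S) :
    A.card + B.card ≤ k + 2 + S.card := by
  classical
  set P1 : Finset ℕ := A ∩ Finset.Ico 1 m with hP1
  set Q1 : Finset ℕ := (B ∩ Finset.Ico 0 (m-1)).image (· + 1) with hQ1
  set P2 : Finset ℕ := B ∩ Finset.Ico (m+1) k with hP2
  set Q2 : Finset ℕ := (A ∩ Finset.Ico m (k-1)).image (· + 1) with hQ2
  have hinj : Function.Injective (· + 1 : ℕ → ℕ) := add_left_injective 1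
  -- cards of images
  have hQ1c : Q1.card = (B ∩ Finset.Ico 0 (m-1)).card := Finset.card_image_of_injective _ hinj
  have hQ2c : Q2.card = (A ∩ Finset.Ico m (k-1)).card := Finset.card_image_of_injective _ hinj
  -- unions inside intervals
  have hU1 : P1 ∪ Q1 ⊆ Finset.Ico 1 m := by
    intro t ht
    rcases Finset.mem_union.1 ht with h | h
    · exact (Finset.mem_inter.1 h).2
    · obtain ⟨s, hs, rfl⟩ := Finset.mem_image.1 h
      have := (Finset.mem_inter.1 hs).2
      simp only [Finset.mem_Ico] at this ⊢
      omega
  have hU2 : P2 ∪ Q2 ⊆ Finset.Ico (m+1) k := by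
    intro t ht
    rcases Finset.mem_union.1 ht with h | h
    · exact (Finset.mem_inter.1 h).2
    · obtain ⟨s, hs, rfl⟩ := Finset.mem_image.1 h
      have := (Finset.mem_inter.1 hs).2
      simp only [Finset.mem_Ico] at this ⊢
      omega
  have key1 : P1.card + (B ∩ Finset.Ico 0 (m-1)).card ≤ (m - 1) + (P1 ∩ Q1).card := by
    have := Finset.card_union_add_card_inter P1 Q1
    have h2 := Finset.card_le_card hU1
    rw [Nat.card_Ico] at h2
    omega
  have key2 : P2.card + (A ∩ Finset.Ico m (k-1)).card ≤ (k - m - 1) + (P2 ∩ Q2).card := by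
    have := Finset.card_union_add_card_inter P2 Q2
    have h2 := Finset.card_le_card hU2
    rw [Nat.card_Ico] at h2
    omega
  have hS1' : P1 ∩ Q1 ⊆ S := by
    intro t ht
    obtain ⟨h1, h2⟩ := Finset.mem_inter.1 ht
    obtain ⟨htA, htI⟩ := Finset.mem_inter.1 h1
    obtain ⟨s, hs, rfl⟩ := Finset.mem_image.1 h2
    obtain ⟨hsB, _⟩ := Finset.mem_inter.1 hs
    rw [Finset.mem_Ico] at htI
    have : s + 1 - 1 = s := by omega
    exact hS1 (s+1) (by omega) (by omega) htA (this ▸ hsB)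
  have hS2' : P2 ∩ Q2 ⊆ S := by
    intro t ht
    obtain ⟨h1, h2⟩ := Finset.mem_inter.1 ht
    obtain ⟨htB, htI⟩ := Finset.mem_inter.1 h1
    obtain ⟨s, hs, rfl⟩ := Finset.mem_image.1 h2
    obtain ⟨hsA, _⟩ := Finset.mem_inter.1 hs
    rw [Finset.mem_Ico] at htI
    have : s + 1 - 1 = s := by omega
    exact hS2 (s+1) (by omega) (by omega) (this ▸ hsA) htB
  have hdisj : Disjoint (P1 ∩ Q1) (P2 ∩ Q2) := by
    have d : Disjoint (Finset.Ico 1 m) (Finset.Ico (m+1) k) := by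
      rw [Finset.disjoint_left]
      intro t h1 h2
      rw [Finset.mem_Ico] at h1 h2; omega
    exact d.mono (Finset.Subset.trans Finset.inter_subset_union hU1)
      (Finset.Subset.trans Finset.inter_subset_union hU2)
  have hSc : (P1 ∩ Q1).card + (P2 ∩ Q2).card ≤ S.card := by
    rw [← Finset.card_union_of_disjoint hdisj]
    exact Finset.card_le_card (Finset.union_subset hS1' hS2')
  have hAbound : A.card ≤ P1.card + (A ∩ Finset.Ico m (k-1)).card + 2 := by
    have hsub : A ⊆ P1 ∪ (A ∩ Finset.Ico m (k-1)) ∪ {0, k-1} := by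
      intro t ht
      have htk : t < k := Finset.mem_range.1 (hA ht)
      simp only [Finset.mem_union, hP1, Finset.mem_inter, Finset.mem_Ico,
        Finset.mem_insert, Finset.mem_singleton]
      by_cases h0 : t = 0
      · tauto
      by_cases h1 : t = k - 1
      · tauto
      by_cases h2 : t < m
      · exact Or.inl (Or.inl ⟨ht, by omega, h2⟩)
      · exact Or.inl (Or.inr ⟨ht, by omega, by omega⟩)
    calc A.card ≤ (P1 ∪ (A ∩ Finset.Ico m (k-1)) ∪ {0, k-1}).card := Finset.card_le_card hsub
      _ ≤ (P1 ∪ (A ∩ Finset.Ico m (k-1))).card + ({0, k-1} : Finset ℕ).card :=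
          Finset.card_union_le _ _
      _ ≤ P1.card + (A ∩ Finset.Ico m (k-1)).card + 2 := by
          have := Finset.card_union_le P1 (A ∩ Finset.Ico m (k-1))
          have h2 : ({0, k-1} : Finset ℕ).card ≤ 2 := Finset.card_insert_le _ _ |>.trans (by simp)
          omega
  have hBbound : B.card ≤ P2.card + (B ∩ Finset.Ico 0 (m-1)).card + 2 := by
    have hsub : B ⊆ P2 ∪ (B ∩ Finset.Ico 0 (m-1)) ∪ {m-1, m} := by
      intro t ht
      have htk : t < k := Finset.mem_range.1 (hB ht)
      simp only [Finset.mem_union, hP2, Finset.mem_inter, Finset.mem_Ico,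
        Finset.mem_insert, Finset.mem_singleton]
      by_cases h0 : t = m - 1
      · tauto
      by_cases h1 : t = m
      · tauto
      by_cases h2 : t < m
      · exact Or.inl (Or.inr ⟨ht, by omega, by omega⟩)
      · exact Or.inl (Or.inl ⟨ht, by omega, htk⟩)
    calc B.card ≤ (P2 ∪ (B ∩ Finset.Ico 0 (m-1)) ∪ {m-1, m}).card := Finset.card_le_card hsub
      _ ≤ (P2 ∪ (B ∩ Finset.Ico 0 (m-1))).card + ({m-1, m} : Finset ℕ).card :=
          Finset.card_union_le _ _
      _ ≤ P2.card + (B ∩ Finset.Ico 0 (m-1)).card + 2 := by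
          have := Finset.card_union_le P2 (B ∩ Finset.Ico 0 (m-1))
          have h2 : ({m-1, m} : Finset ℕ).card ≤ 2 := Finset.card_insert_le _ _ |>.trans (by simp)
          omega
  omega

theorem stmt_16 {V : Type*} [Fintype V] (G : SimpleGraph V) (X Y : Set V)
    (hbip : IsBipartition G X Y)
    (k : ℕ) (hk : 2 ≤ k) (x y : ZMod k → V)
    (hxinj : Function.Injective x) (hyinj : Function.Injective y)
    (hxX : ∀ i, x i ∈ X) (hyY : ∀ i, y i ∈ Y)
    (hadj1 : ∀ i, G.Adj (x i) (y i)) (hadj2 : ∀ i, G.Adj (y i) (x (i + 1)))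
    (i j : ZMod k) (hij : i ≠ j) (a : ℕ)
    (hcross : {c : ZMod k | c ≠ i ∧ c ≠ j ∧
      (((c - i).val < (j - i).val ∧ G.Adj (x i) (y c) ∧ G.Adj (x j) (y (c - 1))) ∨
       ((j - i).val < (c - i).val ∧ G.Adj (x i) (y (c - 1)) ∧ G.Adj (x j) (y c)))}.ncard ≤ a) :
    ((Set.range x ∪ Set.range y) ∩ G.neighborSet (x i)).ncard +
      ((Set.range x ∪ Set.range y) ∩ G.neighborSet (x j)).ncard ≤
      (Set.range x ∪ Set.range y).ncard / 2 + 2 + a := by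
  classical
  haveI : NeZero k := ⟨by omega⟩
  have hdisjXY : Disjoint X Y := hbip.2.1
  have hxy : ∀ c d, x c ≠ y d := by
    intro c d h
    exact Set.disjoint_left.mp hdisjXY (h ▸ hxX c) (hyY d)
  have hnotadjxx : ∀ c d, ¬ G.Adj (x c) (x d) := by
    intro c d h
    rcases hbip.2.2 h with ⟨_, h2⟩ | ⟨h1, _⟩
    · exact Set.disjoint_left.mp hdisjXY (hxX d) h2
    · exact Set.disjoint_left.mp hdisjXY (hxX c) h1
  set A : Finset (ZMod k) := Finset.univ.filter (fun c => G.Adj (x i) (y c)) with hAdef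
  set B : Finset (ZMod k) := Finset.univ.filter (fun c => G.Adj (x j) (y c)) with hBdef
  set S : Finset (ZMod k) := Finset.univ.filter (fun c => c ≠ i ∧ c ≠ j ∧
      (((c - i).val < (j - i).val ∧ G.Adj (x i) (y c) ∧ G.Adj (x j) (y (c - 1))) ∨
       ((j - i).val < (c - i).val ∧ G.Adj (x i) (y (c - 1)) ∧ G.Adj (x j) (y c)))) with hSdef
  -- the crossing set is S
  have hSa : S.card ≤ a := by
    have : {c : ZMod k | c ≠ i ∧ c ≠ j ∧
      (((c - i).val < (j - i).val ∧ G.Adj (x i) (y c) ∧ G.Adj (x j) (y (c - 1))) ∨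
       ((j - i).val < (c - i).val ∧ G.Adj (x i) (y (c - 1)) ∧ G.Adj (x j) (y c)))} = ↑S := by
      ext c; simp [hSdef]
    rw [this, Set.ncard_coe_finset] at hcross
    exact hcross
  -- neighborhood cardinalities
  have hnbhd : ∀ (w : ZMod k) (W : Finset (ZMod k)),
      W = Finset.univ.filter (fun c => G.Adj (x w) (y c)) →
      ((Set.range x ∪ Set.range y) ∩ G.neighborSet (x w)).ncard = W.card := by
    intro w W hW
    have heq : (Set.range x ∪ Set.range y) ∩ G.neighborSet (x w) = y '' ↑W := by
      ext v
      constructor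
      · rintro ⟨hv1, hv2⟩
        rw [SimpleGraph.mem_neighborSet] at hv2
        rcases hv1 with ⟨c, rfl⟩ | ⟨c, rfl⟩
        · exact absurd hv2 (hnotadjxx w c)
        · exact ⟨c, by simp [hW, hv2], rfl⟩
      · rintro ⟨c, hc, rfl⟩
        simp only [hW, Finset.coe_filter, Set.mem_setOf_eq] at hc
        exact ⟨Or.inr ⟨c, rfl⟩, hc.2⟩
    rw [heq, Set.ncard_image_of_injective _ hyinj, Set.ncard_coe_finset]
  -- total cardinality
  have htot : (Set.range x ∪ Set.range y).ncard = 2 * k := by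
    have hrx : (Set.range x).ncard = k := by
      rw [← Set.image_univ, Set.ncard_image_of_injective _ hxinj, Set.ncard_univ,
        Nat.card_eq_fintype_card, ZMod.card]
    have hry : (Set.range y).ncard = k := by
      rw [← Set.image_univ, Set.ncard_image_of_injective _ hyinj, Set.ncard_univ,
        Nat.card_eq_fintype_card, ZMod.card]
    have hd : Disjoint (Set.range x) (Set.range y) := by
      rw [Set.disjoint_left]
      rintro v ⟨c, rfl⟩ hv
      obtain ⟨d, hd⟩ := hv
      exact hxy c d hd.symm
    rw [Set.ncard_union_eq hd (Set.toFinite _) (Set.toFinite _), hrx, hry]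
    omega
  -- the coordinate map
  set φ : ZMod k → ℕ := fun c => (c - i).val with hφdef
  have hφinj : Function.Injective φ := by
    intro c d h
    have := ZMod.val_injective k h
    exact sub_left_injective this
  set m : ℕ := (j - i).val with hmdef
  have hm0 : 0 < m := by
    rcases Nat.eq_zero_or_pos m with h | h
    · exfalso
      have hz : j - i = 0 := (ZMod.val_eq_zero _).mp h
      exact hij (sub_eq_zero.mp hz).symm
    · exact h
  have hmk : m < k := ZMod.val_lt _
  haveI : Fact (1 < k) := ⟨by omega⟩
  have hval1 : (1 : ZMod k).val = 1 := ZMod.val_one k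
  have hsub1 : ∀ c : ZMod k, 1 ≤ (c - i).val → ((c - 1) - i).val = (c - i).val - 1 := by
    intro c hc
    have : (c - 1) - i = (c - i) - 1 := by ring
    rw [this, ZMod.val_sub (by omega), hval1]
  -- transfer to ℕ
  have hAsub : A.image φ ⊆ Finset.range k := by
    intro t ht
    obtain ⟨c, _, rfl⟩ := Finset.mem_image.mp ht
    exact Finset.mem_range.mpr (ZMod.val_lt _)
  have hBsub : B.image φ ⊆ Finset.range k := by
    intro t ht
    obtain ⟨c, _, rfl⟩ := Finset.mem_image.mp ht
    exact Finset.mem_range.mpr (ZMod.val_lt _)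
  have hS1 : ∀ t, 0 < t → t < m → t ∈ A.image φ → t - 1 ∈ B.image φ → t ∈ S.image φ := by
    intro t ht0 htm htA htB
    obtain ⟨c, hcA, hct⟩ := Finset.mem_image.mp htA
    obtain ⟨d, hdB, hdt⟩ := Finset.mem_image.mp htB
    have hct' : (c - i).val = t := hct
    have hdt' : (d - i).val = t - 1 := hdt
    have hd : d = c - 1 := by
      apply hφinj
      show (d - i).val = (c - 1 - i).val
      rw [hsub1 c (by omega), hct']
      exact hdt'
    refine Finset.mem_image.mpr ⟨c, ?_, hct⟩
    simp only [hSdef, Finset.mem_filter, Finset.mem_univ, true_and]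
    refine ⟨?_, ?_, Or.inl ⟨by omega, ?_, ?_⟩⟩
    · intro h; rw [h, sub_self, ZMod.val_zero] at hct'; omega
    · intro h; rw [h] at hct'; omega
    · simpa [hAdef] using hcA
    · rw [← hd]; simpa [hBdef] using hdB
  have hS2 : ∀ t, m < t → t < k → t - 1 ∈ A.image φ → t ∈ B.image φ → t ∈ S.image φ := by
    intro t htm htk htA htB
    obtain ⟨c, hcB, hct⟩ := Finset.mem_image.mp htB
    obtain ⟨d, hdA, hdt⟩ := Finset.mem_image.mp htA
    have hct' : (c - i).val = t := hct
    have hdt' : (d - i).val = t - 1 := hdt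
    have hd : d = c - 1 := by
      apply hφinj
      show (d - i).val = (c - 1 - i).val
      rw [hsub1 c (by omega), hct']
      exact hdt'
    refine Finset.mem_image.mpr ⟨c, ?_, hct⟩
    simp only [hSdef, Finset.mem_filter, Finset.mem_univ, true_and]
    refine ⟨?_, ?_, Or.inr ⟨by omega, ?_, ?_⟩⟩
    · intro h; rw [h, sub_self, ZMod.val_zero] at hct'; omega
    · intro h; rw [h] at hct'; omega
    · rw [← hd]; simpa [hAdef] using hdA
    · simpa [hBdef] using hcB
  have hcore := nat_core k m hk hm0 hmk (A.image φ) (B.image φ) (S.image φ)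
    hAsub hBsub hS1 hS2
  rw [Finset.card_image_of_injective _ hφinj, Finset.card_image_of_injective _ hφinj,
    Finset.card_image_of_injective _ hφinj] at hcore
  rw [hnbhd i A hAdef, hnbhd j B hBdef, htot]
  omega
end

section
/- Let G be a bipartite graph with parts X and Y satisfying condition (*), with |X| ≥ 4. If for some A ⊆ X with |A| ≥ 4 the induced subgraph G[A ∪ N̂(A)] is not 2-connected, then there exists A' ⊆ A with |A'| = 3 such that G[A' ∪ N̂(A')] is not 2-connected. -/
open SimpleGraph Set

lemma reach_mono {V : Type*} (G : SimpleGraph V) {S T : Set V} (h : S ⊆ T) {u v : V}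
    (hu : u ∈ S) (hv : v ∈ S) (hr : (G.induce S).Reachable ⟨u, hu⟩ ⟨v, hv⟩) :
    (G.induce T).Reachable ⟨u, h hu⟩ ⟨v, h hv⟩ :=
  hr.map (SimpleGraph.induceHomOfLE G h).toHom

lemma superNbhd_mono {V : Type*} [Fintype V] (G : SimpleGraph V) (Y : Set V) {A B : Set V}
    (h : A ⊆ B) : superNbhd G Y A ⊆ superNbhd G Y B := by
  intro y hy
  exact ⟨hy.1, le_trans hy.2
    (Set.ncard_le_ncard (Set.inter_subset_inter_left _ h) (Set.toFinite _))⟩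

theorem stmt_18 {V : Type*} [Fintype V] (G : SimpleGraph V) (X Y : Set V)
    (hbip : IsBipartition G X Y) (hX : 4 ≤ X.ncard)
    (hcard : ∀ A ⊆ X, 3 ≤ A.ncard → A.ncard ≤ (superNbhd G Y A).ncard)
    (A : Set V) (hA : A ⊆ X) (hA4 : 4 ≤ A.ncard)
    (hnot : ¬ TwoConnectedOn G (A ∪ superNbhd G Y A)) :
    ∃ A' ⊆ A, A'.ncard = 3 ∧ ¬ TwoConnectedOn G (A' ∪ superNbhd G Y A') := by
  by_contra hcon
  push_neg at hcon
  apply hnot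
  set S : Set V := A ∪ superNbhd G Y A with hS
  have hAS : A ⊆ S := Set.subset_union_left
  have hSfin : S.Finite := Set.toFinite _
  have hScard : 3 ≤ S.ncard := le_trans (by omega) (Set.ncard_le_ncard hAS hSfin)
  refine ⟨hScard, ?_⟩
  intro v hv
  set T : Set V := S \ {v} with hT
  -- A minus v still has at least 3 elements
  have hAv3 : 3 ≤ (A \ {v}).ncard := by
    have := Set.ncard_diff_singleton_le A v
    have h2 : A.ncard - 1 ≤ (A \ {v}).ncard := by
      rcases em (v ∈ A) with hvA | hvA
      · rw [Set.ncard_diff_singleton_of_mem hvA]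
      · rw [Set.diff_singleton_eq_self hvA]; omega
    omega
  -- key: any two elements of A \ {v} are reachable in induce T
  have keyAA : ∀ a ∈ A \ {v}, ∀ b ∈ A \ {v}, ∀ (ha : a ∈ T) (hb : b ∈ T),
      (G.induce T).Reachable ⟨a, ha⟩ ⟨b, hb⟩ := by
    intro a ha' b hb' ha hb
    rcases em (a = b) with rfl | hab
    · rfl
    -- pick c ∈ A \ {a, b, v}
    have hne : (A \ {a, b, v}).Nonempty := by
      rw [Set.nonempty_iff_ne_empty]
      intro hemp
      have hsub : A ⊆ {a, b, v} := by
        intro x hx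
        by_contra hx2
        exact (Set.eq_empty_iff_forall_notMem.mp hemp x) ⟨hx, hx2⟩
      have : A.ncard ≤ ({a, b, v} : Set V).ncard :=
        Set.ncard_le_ncard hsub (Set.toFinite _)
      have h3 : ({a, b, v} : Set V).ncard ≤ 3 := by
        apply le_trans (Set.ncard_insert_le _ _)
        have := Set.ncard_insert_le b ({v} : Set V)
        simp only [Set.ncard_singleton] at this ⊢
        omega
      omega
    obtain ⟨c, hcA, hc⟩ := hne
    simp only [Set.mem_insert_iff, Set.mem_singleton_iff, not_or] at hc
    obtain ⟨hca, hcb, hcv⟩ := hc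
    set A' : Set V := {a, b, c} with hA'
    have hA'A : A' ⊆ A := by
      intro x hx
      rcases hx with rfl | rfl | rfl
      exacts [ha'.1, hb'.1, hcA]
    have hA'3 : A'.ncard = 3 :=
      Set.ncard_eq_three.mpr ⟨a, b, c, fun h => hab h, fun h => hca h.symm,
        fun h => hcb h.symm, rfl⟩
    have h2c := hcon A' hA'A hA'3
    set S' : Set V := A' ∪ superNbhd G Y A' with hS'
    have hS'S : S' ⊆ S :=
      Set.union_subset_union hA'A (superNbhd_mono G Y hA'A)
    -- choose the vertex w to delete from S'
    have hmain : ∀ w ∈ S', a ≠ w → b ≠ w → S' \ {w} ⊆ T →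
        (G.induce T).Reachable ⟨a, ha⟩ ⟨b, hb⟩ := by
      intro w hw haw hbw hsub
      have hconn := h2c.2 w hw
      have haw' : a ∈ S' \ {w} := ⟨Set.mem_union_left _ (by left; rfl), haw⟩
      have hbw' : b ∈ S' \ {w} := ⟨Set.mem_union_left _ (by right; left; rfl), hbw⟩
      have := hconn.preconnected ⟨a, haw'⟩ ⟨b, hbw'⟩
      exact reach_mono G hsub haw' hbw' this
    rcases em (v ∈ S') with hvS' | hvS'
    · refine hmain v hvS' (fun h => ha'.2 h) (fun h => hb'.2 h) ?_
      intro x hx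
      exact ⟨hS'S hx.1, hx.2⟩
    · -- v ∉ S' : delete any vertex w ∈ S' \ {a, b}
      have hne2 : (S' \ {a, b}).Nonempty := by
        rw [Set.nonempty_iff_ne_empty]
        intro hemp
        have hsub : S' ⊆ {a, b} := by
          intro x hx
          by_contra hx2
          exact (Set.eq_empty_iff_forall_notMem.mp hemp x) ⟨hx, hx2⟩
        have h1 : S'.ncard ≤ ({a, b} : Set V).ncard :=
          Set.ncard_le_ncard hsub (Set.toFinite _)
        have h2 : ({a, b} : Set V).ncard ≤ 2 := by
          apply le_trans (Set.ncard_insert_le _ _); simp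
        have := h2c.1
        omega
      obtain ⟨w, hwS', hw⟩ := hne2
      simp only [Set.mem_insert_iff, Set.mem_singleton_iff, not_or] at hw
      refine hmain w hwS' (fun h => hw.1 h.symm) (fun h => hw.2 h.symm) ?_
      intro x hx
      refine ⟨hS'S hx.1, ?_⟩
      intro hxv
      rw [Set.mem_singleton_iff] at hxv
      exact hvS' (hxv ▸ hx.1)
  -- every vertex of T reaches some element of A \ {v}
  have keyTA : ∀ u (hu : u ∈ T), ∃ a, ∃ haA : a ∈ A \ {v}, ∃ ha : a ∈ T,
      (G.induce T).Reachable ⟨u, hu⟩ ⟨a, ha⟩ := by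
    intro u hu
    rcases hu.1 with huA | huN
    · exact ⟨u, ⟨huA, hu.2⟩, hu, by rfl⟩
    · -- u ∈ superNbhd, has ≥ 2 neighbors in A, pick one ≠ v
      have h2 : 2 ≤ (A ∩ G.neighborSet u).ncard := huN.2
      have hne : ((A ∩ G.neighborSet u) \ {v}).Nonempty := by
        rw [Set.nonempty_iff_ne_empty]
        intro hemp
        have hsub : A ∩ G.neighborSet u ⊆ {v} := by
          intro x hx
          by_contra hx2
          exact (Set.eq_empty_iff_forall_notMem.mp hemp x) ⟨hx, hx2⟩
        have := Set.ncard_le_ncard hsub (Set.toFinite _)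
        simp only [Set.ncard_singleton] at this
        omega
      obtain ⟨a, ⟨haA, hadj⟩, hav⟩ := hne
      rw [Set.mem_singleton_iff] at hav
      have haT : a ∈ T := ⟨hAS haA, hav⟩
      refine ⟨a, ⟨haA, hav⟩, haT, ?_⟩
      exact SimpleGraph.Adj.reachable (by exact hadj : G.Adj u a)
  -- conclude connectedness of induce T
  have hTne : T.Nonempty := by
    obtain ⟨a, haA⟩ : (A \ {v}).Nonempty := by
      rw [← Set.ncard_pos (Set.toFinite _)]; omega
    exact ⟨a, hAS haA.1, haA.2⟩
  rw [SimpleGraph.connected_iff]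
  constructor
  · intro ⟨u, hu⟩ ⟨w, hw⟩
    obtain ⟨a, haA, ha, hra⟩ := keyTA u hu
    obtain ⟨b, hbA, hb, hrb⟩ := keyTA w hw
    exact hra.trans ((keyAA a haA b hbA ha hb).trans hrb.symm)
  · obtain ⟨x, hx⟩ := hTne
    exact ⟨⟨x, hx⟩⟩
end
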